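/- Let n ≥ 1, α_i ≥ 1, γ_i ≥ 1, β_i ≥ 2 for all i. If 2(e − 1)·∏_{i=1}^n [Γ(β_i)]^{γ_i} < ∏_{i=1}^n [Γ(α_i + β_i)]^{γ_i}, then the normalized multi-index Le Roy function 𝔽(z) = z + ∑_{k=1}^∞ A_{k+1} z^{k+1}, A_{k+1} = ∏_i[Γ(β_i)]^{γ_i}/∏_i[Γ(α_i k + β_i)]^{γ_i}, satisfies |𝔽'(z) − 1| < 1 for all |z| < 1, and hence 𝔽 is convex in {z : |z| < 1/2}. -/

import Mathlib

open scoped Nat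

/-- auxiliary: norm of a coefficient term -/
lemma leroy_norm_eq (c : ℝ) (hc : 0 ≤ c) (m : ℕ) (y : ℂ) :
    ‖(c : ℂ) * ((m : ℂ) + 2) * y ^ (m + 1)‖ = c * ((m : ℝ) + 2) * ‖y‖ ^ (m + 1) := by
  have h2 : ‖((m : ℂ) + 2)‖ = (m : ℝ) + 2 := by
    rw [show ((m : ℂ) + 2) = ((m + 2 : ℕ) : ℂ) by push_cast; ring, Complex.norm_natCast]
    push_cast; ring
  rw [norm_mul, norm_mul, norm_pow, Complex.norm_real, Real.norm_eq_abs, abs_of_nonneg hc, h2]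

lemma leroy_norm_eq2 (c : ℝ) (hc : 0 ≤ c) (m : ℕ) (y : ℂ) :
    ‖(c : ℂ) * ((m : ℂ) + 2) * ((m : ℂ) + 1) * y ^ m‖
      = c * ((m : ℝ) + 2) * ((m : ℝ) + 1) * ‖y‖ ^ m := by
  have h2 : ‖((m : ℂ) + 2)‖ = (m : ℝ) + 2 := by
    rw [show ((m : ℂ) + 2) = ((m + 2 : ℕ) : ℂ) by push_cast; ring, Complex.norm_natCast]
    push_cast; ring
  have h1 : ‖((m : ℂ) + 1)‖ = (m : ℝ) + 1 := by
    rw [show ((m : ℂ) + 1) = ((m + 1 : ℕ) : ℂ) by push_cast; ring, Complex.norm_natCast]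
    push_cast; ring
  rw [norm_mul, norm_mul, norm_mul, norm_pow, Complex.norm_real, Real.norm_eq_abs,
    abs_of_nonneg hc, h2, h1]

lemma leroy_exp_sum : ∑' m : ℕ, (1 : ℝ) / ((m + 1)! : ℝ) = Real.exp 1 - 1 := by
  have hs : Summable (fun n : ℕ => 1 / (n ! : ℝ)) := by
    simpa using Real.summable_pow_div_factorial 1
  have h1 : Real.exp 1 = ∑' n : ℕ, 1 / (n ! : ℝ) := by
    rw [Real.exp_eq_exp_ℝ, NormedSpace.exp_eq_tsum_div]
    simp
  rw [Summable.tsum_eq_zero_add hs] at h1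
  simp only [Nat.factorial_zero, Nat.cast_one, div_one] at h1
  linarith [h1]

lemma leroy_two_pow (m : ℕ) : ((m : ℝ) + 2) * (1 / 2 : ℝ) ^ (m + 1) ≤ 1 := by
  have h : (m + 2 : ℕ) ≤ 2 ^ (m + 1) := Nat.lt_two_pow_self (n := m + 1)
  have h' : ((m : ℝ) + 2) ≤ 2 ^ (m + 1) := by exact_mod_cast h
  have h2 : ((1 : ℝ) / 2) ^ (m + 1) = 1 / 2 ^ (m + 1) := by
    rw [div_pow, one_pow]
  rw [h2, mul_one_div, div_le_one (by positivity)]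
  exact h'

theorem leroy_main (c : ℕ → ℝ) (B : ℝ) (h0 : ∀ m, 0 ≤ c m)
    (hB : ∀ m, c m * ((m + 2)! : ℝ) ≤ B) (hB1 : B * (Real.exp 1 - 1) < 1) :
    (∀ z : ℂ, ‖z‖ < 1 →
      ‖deriv (fun w : ℂ => w + ∑' k : ℕ, (c k : ℂ) * w ^ (k + 2)) z - 1‖ < 1) ∧
    (∀ z : ℂ, ‖z‖ < 1 / 2 →
      0 < (1 + z * deriv (deriv (fun w : ℂ => w + ∑' k : ℕ, (c k : ℂ) * w ^ (k + 2))) z /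
          deriv (fun w : ℂ => w + ∑' k : ℕ, (c k : ℂ) * w ^ (k + 2)) z).re) := by
  have hB0 : 0 ≤ B := le_trans (mul_nonneg (h0 0) (by positivity)) (hB 0)
  set f : ℂ → ℂ := fun w => w + ∑' k : ℕ, (c k : ℂ) * w ^ (k + 2) with hf
  set U : ℂ → ℂ := fun z => ∑' m : ℕ, (c m : ℂ) * ((m : ℂ) + 2) * z ^ (m + 1) with hUdef
  set V : ℂ → ℂ := fun z => ∑' m : ℕ, (c m : ℂ) * ((m : ℂ) + 2) * ((m : ℂ) + 1) * z ^ m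
    with hVdef
  -- coefficient bounds
  have hterm1 : ∀ m : ℕ, c m * ((m : ℝ) + 2) ≤ B / ((m + 1)! : ℝ) := by
    intro m
    rw [le_div_iff₀ (by positivity : (0:ℝ) < ((m + 1)! : ℝ))]
    calc c m * ((m : ℝ) + 2) * ((m + 1)! : ℝ) = c m * ((m + 2)! : ℝ) := by
          rw [show (m + 2)! = (m + 2) * (m + 1)! from rfl]; push_cast; ring
      _ ≤ B := hB m
  have hterm2 : ∀ m : ℕ, c m * ((m : ℝ) + 2) * ((m : ℝ) + 1) ≤ B / (m ! : ℝ) := by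
    intro m
    rw [le_div_iff₀ (by positivity : (0:ℝ) < (m ! : ℝ))]
    calc c m * ((m : ℝ) + 2) * ((m : ℝ) + 1) * (m ! : ℝ) = c m * ((m + 2)! : ℝ) := by
          rw [show (m + 2)! = (m + 2) * ((m + 1) * m !) from rfl]; push_cast; ring
      _ ≤ B := hB m
  -- summability facts
  have Sfac : Summable (fun m : ℕ => B / ((m + 1)! : ℝ)) := by
    have h : Summable (fun n : ℕ => B / (n ! : ℝ)) := by
      simpa [div_eq_mul_inv] using (Real.summable_pow_div_factorial 1).mul_left B
    exact (summable_nat_add_iff (f := fun n : ℕ => B / (n ! : ℝ)) 1).mpr h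
  have SfacV : Summable (fun m : ℕ => B / (m ! : ℝ)) := by
    simpa [div_eq_mul_inv] using (Real.summable_pow_div_factorial 1).mul_left B
  have S2a : Summable (fun m : ℕ => B * (2 ^ (m + 1) / ((m + 1)! : ℝ))) := by
    have h : Summable (fun n : ℕ => B * (2 ^ n / (n ! : ℝ))) :=
      (Real.summable_pow_div_factorial 2).mul_left B
    exact (summable_nat_add_iff (f := fun n : ℕ => B * (2 ^ n / (n ! : ℝ))) 1).mpr h
  have S2b : Summable (fun m : ℕ => B * (2 ^ m / (m ! : ℝ))) :=
    (Real.summable_pow_div_factorial 2).mul_left B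
  have SU : Summable (fun m : ℕ => c m * ((m : ℝ) + 2) * 2 ^ (m + 1)) := by
    refine Summable.of_nonneg_of_le (fun m => mul_nonneg (mul_nonneg (h0 m) (by positivity)) (by positivity)) (fun m => ?_) S2a
    calc c m * ((m : ℝ) + 2) * 2 ^ (m + 1) ≤ (B / ((m + 1)! : ℝ)) * 2 ^ (m + 1) :=
          mul_le_mul_of_nonneg_right (hterm1 m) (by positivity)
      _ = B * (2 ^ (m + 1) / ((m + 1)! : ℝ)) := by ring
  have SV : Summable (fun m : ℕ => c m * ((m : ℝ) + 2) * ((m : ℝ) + 1) * 2 ^ m) := by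
    refine Summable.of_nonneg_of_le (fun m => mul_nonneg (mul_nonneg (mul_nonneg (h0 m) (by positivity)) (by positivity)) (by positivity)) (fun m => ?_) S2b
    calc c m * ((m : ℝ) + 2) * ((m : ℝ) + 1) * 2 ^ m ≤ (B / (m ! : ℝ)) * 2 ^ m :=
          mul_le_mul_of_nonneg_right (hterm2 m) (by positivity)
      _ = B * (2 ^ m / (m ! : ℝ)) := by ring
  -- termwise derivatives
  have hg : ∀ (m : ℕ) (y : ℂ), HasDerivAt (fun w : ℂ => (c m : ℂ) * w ^ (m + 2))
      ((c m : ℂ) * ((m : ℂ) + 2) * y ^ (m + 1)) y := by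
    intro m y
    have h := (hasDerivAt_pow (m + 2) y).const_mul ((c m : ℂ))
    refine h.congr_deriv ?_
    push_cast
    ring
  have hg2 : ∀ (m : ℕ) (y : ℂ), HasDerivAt (fun w : ℂ => (c m : ℂ) * ((m : ℂ) + 2) * w ^ (m + 1))
      ((c m : ℂ) * ((m : ℂ) + 2) * ((m : ℂ) + 1) * y ^ m) y := by
    intro m y
    have h := (hasDerivAt_pow (m + 1) y).const_mul ((c m : ℂ) * ((m : ℂ) + 2))
    refine h.congr_deriv ?_
    push_cast
    ring
  have hball : IsOpen (Metric.ball (0 : ℂ) 2) := Metric.isOpen_ball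
  have hconn : IsPreconnected (Metric.ball (0 : ℂ) 2) :=
    (convex_ball (0 : ℂ) 2).isPreconnected
  have h0mem : (0 : ℂ) ∈ Metric.ball (0 : ℂ) 2 := by
    simp [Metric.mem_ball]
  -- derivative of the series part
  have hU : ∀ z ∈ Metric.ball (0 : ℂ) 2,
      HasDerivAt (fun w : ℂ => ∑' k : ℕ, (c k : ℂ) * w ^ (k + 2)) (U z) z := by
    intro z hz
    refine hasDerivAt_tsum_of_isPreconnected SU hball hconn
      (fun m y _ => hg m y) (fun m y hy => ?_) h0mem ?_ hz
    · rw [leroy_norm_eq (c m) (h0 m) m y]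
      have hy2 : ‖y‖ ≤ 2 := le_of_lt (mem_ball_zero_iff.mp hy)
      have hp := pow_le_pow_left₀ (norm_nonneg y) hy2 (m + 1)
      exact mul_le_mul_of_nonneg_left hp (mul_nonneg (h0 m) (by positivity))
    · apply summable_zero.congr
      intro m
      simp
  have hUd : ∀ z ∈ Metric.ball (0 : ℂ) 2, HasDerivAt f (1 + U z) z := by
    intro z hz
    exact (hasDerivAt_id z).add (hU z hz)
  have hdf : ∀ z ∈ Metric.ball (0 : ℂ) 2, deriv f z = 1 + U z :=
    fun z hz => (hUd z hz).deriv
  have hV : ∀ z ∈ Metric.ball (0 : ℂ) 2, HasDerivAt U (V z) z := by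
    intro z hz
    refine hasDerivAt_tsum_of_isPreconnected SV hball hconn
      (fun m y _ => hg2 m y) (fun m y hy => ?_) h0mem ?_ hz
    · rw [leroy_norm_eq2 (c m) (h0 m) m y]
      have hy2 : ‖y‖ ≤ 2 := le_of_lt (mem_ball_zero_iff.mp hy)
      have hp := pow_le_pow_left₀ (norm_nonneg y) hy2 m
      exact mul_le_mul_of_nonneg_left hp
        (mul_nonneg (mul_nonneg (h0 m) (by positivity)) (by positivity))
    · apply summable_zero.congr
      intro m
      simp
  have hddf : ∀ z ∈ Metric.ball (0 : ℂ) 2, deriv (deriv f) z = V z := by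
    intro z hz
    have heq : deriv f =ᶠ[nhds z] fun w => 1 + U w := by
      filter_upwards [hball.mem_nhds hz] with w hw using hdf w hw
    rw [heq.deriv_eq]
    exact ((hV z hz).const_add 1).deriv
  -- norm estimate for U on the closed unit disc
  have hUsum : ∀ z : ℂ, ‖z‖ ≤ 1 →
      Summable (fun m : ℕ => ‖(c m : ℂ) * ((m : ℂ) + 2) * z ^ (m + 1)‖) := by
    intro z hz
    refine Summable.of_nonneg_of_le (fun m => norm_nonneg _) (fun m => ?_) Sfac
    rw [leroy_norm_eq (c m) (h0 m) m z]
    calc c m * ((m : ℝ) + 2) * ‖z‖ ^ (m + 1)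
        ≤ c m * ((m : ℝ) + 2) * 1 := by
          apply mul_le_mul_of_nonneg_left _ (mul_nonneg (h0 m) (by positivity))
          exact pow_le_one₀ (norm_nonneg z) hz
      _ ≤ B / ((m + 1)! : ℝ) := by rw [mul_one]; exact hterm1 m
  have estU : ∀ z : ℂ, ‖z‖ ≤ 1 → ‖U z‖ ≤ B * (Real.exp 1 - 1) := by
    intro z hz
    calc ‖U z‖ ≤ ∑' m : ℕ, ‖(c m : ℂ) * ((m : ℂ) + 2) * z ^ (m + 1)‖ :=
          norm_tsum_le_tsum_norm (hUsum z hz)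
      _ ≤ ∑' m : ℕ, B / ((m + 1)! : ℝ) := by
          refine Summable.tsum_le_tsum (fun m => ?_) (hUsum z hz) Sfac
          rw [leroy_norm_eq (c m) (h0 m) m z]
          calc c m * ((m : ℝ) + 2) * ‖z‖ ^ (m + 1)
              ≤ c m * ((m : ℝ) + 2) * 1 := by
                apply mul_le_mul_of_nonneg_left _ (mul_nonneg (h0 m) (by positivity))
                exact pow_le_one₀ (norm_nonneg z) hz
            _ ≤ B / ((m + 1)! : ℝ) := by rw [mul_one]; exact hterm1 m
      _ = B * (Real.exp 1 - 1) := by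
          rw [← leroy_exp_sum, ← tsum_mul_left]
          congr 1 with m
          rw [mul_one_div]
  constructor
  · -- part 1
    intro z hz
    have hz' : ‖z‖ < 1 := by exact hz
    have hzball : z ∈ Metric.ball (0 : ℂ) 2 := by
      rw [mem_ball_zero_iff]; linarith
    rw [hdf z hzball, add_sub_cancel_left]
    exact lt_of_le_of_lt (estU z hz'.le) hB1
  · -- part 2
    intro z hz
    have hz' : ‖z‖ < 1 / 2 := by exact hz
    have hzball : z ∈ Metric.ball (0 : ℂ) 2 := by
      rw [mem_ball_zero_iff]; linarith
    rw [hdf z hzball, hddf z hzball]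
    -- combined norm estimate
    set a : ℕ → ℝ := fun m => ‖(c m : ℂ) * ((m : ℂ) + 2) * z ^ (m + 1)‖ with ha
    set b : ℕ → ℝ := fun m => ‖z‖ * ‖(c m : ℂ) * ((m : ℂ) + 2) * ((m : ℂ) + 1) * z ^ m‖ with hb
    have Sa : Summable a := hUsum z (by linarith)
    have SnV : Summable (fun m : ℕ => ‖(c m : ℂ) * ((m : ℂ) + 2) * ((m : ℂ) + 1) * z ^ m‖) := by
      refine Summable.of_nonneg_of_le (fun m => norm_nonneg _) (fun m => ?_) SfacV
      rw [leroy_norm_eq2 (c m) (h0 m) m z]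
      calc c m * ((m : ℝ) + 2) * ((m : ℝ) + 1) * ‖z‖ ^ m
          ≤ c m * ((m : ℝ) + 2) * ((m : ℝ) + 1) * 1 := by
            apply mul_le_mul_of_nonneg_left _
              (mul_nonneg (mul_nonneg (h0 m) (by positivity)) (by positivity))
            exact pow_le_one₀ (norm_nonneg z) (by linarith)
        _ ≤ B / (m ! : ℝ) := by rw [mul_one]; exact hterm2 m
    have Sb : Summable b := SnV.mul_left ‖z‖
    have hab : ∀ m : ℕ, a m + b m ≤ B / ((m + 1)! : ℝ) := by
      intro m
      have he : a m + b m = c m * ((m : ℝ) + 2) * (((m : ℝ) + 2) * ‖z‖ ^ (m + 1)) := by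
        rw [ha, hb]
        simp only
        rw [leroy_norm_eq (c m) (h0 m) m z, leroy_norm_eq2 (c m) (h0 m) m z]
        ring
      rw [he]
      have hpow : ((m : ℝ) + 2) * ‖z‖ ^ (m + 1) ≤ 1 := by
        calc ((m : ℝ) + 2) * ‖z‖ ^ (m + 1) ≤ ((m : ℝ) + 2) * (1 / 2 : ℝ) ^ (m + 1) := by
              apply mul_le_mul_of_nonneg_left _ (by positivity)
              exact pow_le_pow_left₀ (norm_nonneg z) (by linarith) (m + 1)
          _ ≤ 1 := leroy_two_pow m
      calc c m * ((m : ℝ) + 2) * (((m : ℝ) + 2) * ‖z‖ ^ (m + 1))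
          ≤ (B / ((m + 1)! : ℝ)) * (((m : ℝ) + 2) * ‖z‖ ^ (m + 1)) :=
            mul_le_mul_of_nonneg_right (hterm1 m) (by positivity)
        _ ≤ (B / ((m + 1)! : ℝ)) * 1 := mul_le_mul_of_nonneg_left hpow (by positivity)
        _ = B / ((m + 1)! : ℝ) := mul_one _
    have hcomb : ‖U z‖ + ‖z * V z‖ ≤ B * (Real.exp 1 - 1) := by
      have h1 : ‖U z‖ ≤ ∑' m, a m := norm_tsum_le_tsum_norm Sa
      have h2 : ‖z * V z‖ ≤ ∑' m, b m := by
        calc ‖z * V z‖ = ‖z‖ * ‖V z‖ := norm_mul z (V z)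
          _ ≤ ‖z‖ * ∑' m : ℕ, ‖(c m : ℂ) * ((m : ℂ) + 2) * ((m : ℂ) + 1) * z ^ m‖ :=
              mul_le_mul_of_nonneg_left (norm_tsum_le_tsum_norm SnV) (norm_nonneg z)
          _ = ∑' m, b m := tsum_mul_left.symm
      have h3 : (∑' m, a m) + (∑' m, b m) ≤ B * (Real.exp 1 - 1) := by
        rw [← Summable.tsum_add Sa Sb]
        calc ∑' m, (a m + b m) ≤ ∑' m : ℕ, B / ((m + 1)! : ℝ) :=
              Summable.tsum_le_tsum hab (Sa.add Sb) Sfac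
          _ = B * (Real.exp 1 - 1) := by
              rw [← leroy_exp_sum, ← tsum_mul_left]
              congr 1 with m
              rw [mul_one_div]
      linarith
    have hlt1 : ‖U z‖ + ‖z * V z‖ < 1 := lt_of_le_of_lt hcomb hB1
    have h1u : 1 - ‖U z‖ ≤ ‖1 + U z‖ := by
      have h := norm_add_le (1 + U z) (-(U z))
      simp only [add_neg_cancel_right, norm_neg, norm_one] at h
      linarith
    have hpos : 0 < ‖1 + U z‖ := by
      have := norm_nonneg (z * V z)
      linarith
    have hlt : ‖z * V z / (1 + U z)‖ < 1 := by
      rw [norm_div, div_lt_one hpos]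
      linarith
    rw [Complex.add_re, Complex.one_re]
    have habs : |(z * V z / (1 + U z)).re| ≤ ‖z * V z / (1 + U z)‖ := by
      exact Complex.abs_re_le_norm _
    have := (abs_le.mp habs).1
    linarith

theorem multi_leroy_convex (n : ℕ) (hn : 1 ≤ n)
    (α β γ : Fin n → ℝ)
    (hα : ∀ i, 1 ≤ α i) (hγ : ∀ i, 1 ≤ γ i) (hβ : ∀ i, 2 ≤ β i)
    (hcond : 2 * (Real.exp 1 - 1) * ∏ i, (Real.Gamma (β i)) ^ γ i <
      ∏ i, (Real.Gamma (α i + β i)) ^ γ i) :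
    (∀ z : ℂ, ‖z‖ < 1 →
      ‖deriv (fun w : ℂ => w + ∑' k : ℕ,
          ((∏ i, (Real.Gamma (β i)) ^ γ i) /
            (∏ i, (Real.Gamma (α i * (k + 1 : ℕ) + β i)) ^ γ i) : ℝ) * w ^ (k + 2)) z
        - 1‖ < 1) ∧
    (∀ z : ℂ, ‖z‖ < 1 / 2 →
      0 < (1 + z *
          deriv (deriv (fun w : ℂ => w + ∑' k : ℕ,
            ((∏ i, (Real.Gamma (β i)) ^ γ i) /
              (∏ i, (Real.Gamma (α i * (k + 1 : ℕ) + β i)) ^ γ i) : ℝ) * w ^ (k + 2))) z /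
          deriv (fun w : ℂ => w + ∑' k : ℕ,
            ((∏ i, (Real.Gamma (β i)) ^ γ i) /
              (∏ i, (Real.Gamma (α i * (k + 1 : ℕ) + β i)) ^ γ i) : ℝ) * w ^ (k + 2)) z).re)
    := by
  -- notation
  set P : ℝ := ∏ i, (Real.Gamma (β i)) ^ γ i with hPdef
  set Q : ℕ → ℝ := fun m => ∏ i, (Real.Gamma (α i * (m : ℕ) + β i)) ^ γ i with hQdef
  have hα0 : ∀ i, (0:ℝ) ≤ α i := fun i => le_trans zero_le_one (hα i)
  have hγ0 : ∀ i, (0:ℝ) ≤ γ i := fun i => le_trans zero_le_one (hγ i)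
  have hargs : ∀ (m : ℕ) (i : Fin n), (2:ℝ) ≤ α i * m + β i := by
    intro m i
    have : (0:ℝ) ≤ α i * m := mul_nonneg (hα0 i) (Nat.cast_nonneg m)
    linarith [hβ i]
  have hP : 0 < P := by
    apply Finset.prod_pos
    intro i _
    exact Real.rpow_pos_of_pos (Real.Gamma_pos_of_pos (by linarith [hβ i])) _
  have hQpos : ∀ m : ℕ, 0 < Q m := by
    intro m
    apply Finset.prod_pos
    intro i _
    exact Real.rpow_pos_of_pos (Real.Gamma_pos_of_pos (by linarith [hargs m i])) _
  have hGmono : ∀ x y : ℝ, 2 ≤ x → x ≤ y → Real.Gamma x ≤ Real.Gamma y := by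
    intro x y hx hxy
    exact Real.Gamma_strictMonoOn_Ici.monotoneOn hx (le_trans hx hxy) hxy
  have hG1 : ∀ x : ℝ, 2 ≤ x → 1 ≤ Real.Gamma x := by
    intro x hx
    have := hGmono 2 x le_rfl hx
    rwa [Real.Gamma_two] at this
  -- the key step inequality
  have step : ∀ m : ℕ, ((m : ℝ) + 2) * Q m ≤ Q (m + 1) := by
    intro m
    have hterm : ∀ i : Fin n,
        (α i * m + β i) ^ γ i * (Real.Gamma (α i * m + β i)) ^ γ i
          ≤ (Real.Gamma (α i * ((m : ℕ) + 1 : ℕ) + β i)) ^ γ i := by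
      intro i
      set x : ℝ := α i * m + β i with hx
      have hx2 : (2:ℝ) ≤ x := hargs m i
      have hΓx : 0 < Real.Gamma x := Real.Gamma_pos_of_pos (by linarith)
      have key : x * Real.Gamma x ≤ Real.Gamma (α i * ((m : ℕ) + 1 : ℕ) + β i) := by
        have e1 : Real.Gamma (x + 1) = x * Real.Gamma x :=
          Real.Gamma_add_one (by linarith)
        have e2 : x + 1 ≤ α i * ((m : ℕ) + 1 : ℕ) + β i := by
          push_cast
          have : (1:ℝ) ≤ α i := hα i
          nlinarith [hα i]
        calc x * Real.Gamma x = Real.Gamma (x + 1) := e1.symm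
          _ ≤ Real.Gamma (α i * ((m : ℕ) + 1 : ℕ) + β i) := hGmono _ _ (by linarith) e2
      calc (α i * m + β i) ^ γ i * (Real.Gamma (α i * m + β i)) ^ γ i
          = (x * Real.Gamma x) ^ γ i := by
            rw [← Real.mul_rpow (by linarith) hΓx.le]
        _ ≤ (Real.Gamma (α i * ((m : ℕ) + 1 : ℕ) + β i)) ^ γ i :=
            Real.rpow_le_rpow (by positivity) key (hγ0 i)
    have hprod : (∏ i, (α i * m + β i) ^ γ i) * Q m ≤ Q (m + 1) := by
      rw [hQdef]
      simp only
      rw [← Finset.prod_mul_distrib]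
      apply Finset.prod_le_prod
      · intro i _
        apply mul_nonneg (Real.rpow_nonneg (by linarith [hargs m i]) _)
        exact Real.rpow_nonneg (Real.Gamma_pos_of_pos (by linarith [hargs m i])).le _
      · intro i _
        exact hterm i
    have hsingle : ((m : ℝ) + 2) ≤ ∏ i, (α i * m + β i) ^ γ i := by
      have i0 : Fin n := ⟨0, hn⟩
      have h1 : ∀ i ∈ Finset.univ, (1:ℝ) ≤ (α i * m + β i) ^ γ i := by
        intro i _
        have hx2 : (2:ℝ) ≤ α i * m + β i := hargs m i
        calc (1:ℝ) ≤ α i * m + β i := by linarith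
          _ = (α i * m + β i) ^ (1:ℝ) := (Real.rpow_one _).symm
          _ ≤ (α i * m + β i) ^ γ i :=
            Real.rpow_le_rpow_of_exponent_le (by linarith) (hγ i)
      have h2 : ((m : ℝ) + 2) ≤ (α i0 * m + β i0) ^ γ i0 := by
        have hx2 : (2:ℝ) ≤ α i0 * m + β i0 := hargs m i0
        have hm : (m : ℝ) + 2 ≤ α i0 * m + β i0 := by
          have h3 : (m:ℝ) ≤ α i0 * m := by
            nlinarith [hα i0, Nat.cast_nonneg (α := ℝ) m]
          linarith [hβ i0]
        calc ((m : ℝ) + 2) ≤ α i0 * m + β i0 := hm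
          _ = (α i0 * m + β i0) ^ (1:ℝ) := (Real.rpow_one _).symm
          _ ≤ (α i0 * m + β i0) ^ γ i0 :=
            Real.rpow_le_rpow_of_exponent_le (by linarith) (hγ i0)
      have hrest : (1:ℝ) ≤ ∏ i ∈ Finset.univ.erase i0, (α i * m + β i) ^ γ i := by
        calc (1:ℝ) = ∏ _i ∈ Finset.univ.erase i0, (1:ℝ) := (Finset.prod_const_one).symm
          _ ≤ ∏ i ∈ Finset.univ.erase i0, (α i * m + β i) ^ γ i :=
            Finset.prod_le_prod (fun i _ => zero_le_one) (fun i _ => h1 i (Finset.mem_univ i))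
      calc ((m : ℝ) + 2) ≤ (α i0 * m + β i0) ^ γ i0 := h2
        _ ≤ (α i0 * m + β i0) ^ γ i0 * ∏ i ∈ Finset.univ.erase i0, (α i * m + β i) ^ γ i := by
            apply le_mul_of_one_le_right _ hrest
            exact le_trans zero_le_one (h1 i0 (Finset.mem_univ i0))
        _ = ∏ i, (α i * m + β i) ^ γ i :=
            Finset.mul_prod_erase Finset.univ (fun i => (α i * (m:ℝ) + β i) ^ γ i)
              (Finset.mem_univ i0)
    calc ((m : ℝ) + 2) * Q m ≤ (∏ i, (α i * m + β i) ^ γ i) * Q m :=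
          mul_le_mul_of_nonneg_right hsingle (hQpos m).le
      _ ≤ Q (m + 1) := hprod
  -- factorial lower bound
  have key : ∀ m : ℕ, ((m + 2)! : ℝ) * Q 1 ≤ 2 * Q (m + 1) := by
    intro m
    induction m with
    | zero => norm_num [Nat.factorial]
    | succ k ih =>
      have h1 : ((k + 3)! : ℝ) = ((k : ℝ) + 3) * ((k + 2)! : ℝ) := by
        rw [show (k + 3)! = (k + 3) * (k + 2)! from rfl]
        push_cast
        ring
      have h2 : ((k:ℝ) + 3) * (((k + 2)! : ℝ) * Q 1) ≤ ((k:ℝ) + 3) * (2 * Q (k + 1)) :=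
        mul_le_mul_of_nonneg_left ih (by positivity)
      have h3 : (((k:ℕ) + 1 : ℝ) + 2) * Q (k + 1) ≤ Q (k + 2) := by
        have := step (k + 1)
        convert this using 3 <;> push_cast <;> ring
      have h4 : ((k:ℝ) + 3) * Q (k + 1) ≤ Q (k + 2) := by
        have : ((k:ℕ) + 1 : ℝ) + 2 = (k:ℝ) + 3 := by push_cast; ring
        rwa [this] at h3
      calc ((k + 1 + 2)! : ℝ) * Q 1 = ((k:ℝ) + 3) * (((k + 2)! : ℝ) * Q 1) := by
            rw [show k + 1 + 2 = k + 3 from rfl, h1]; ring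
        _ ≤ ((k:ℝ) + 3) * (2 * Q (k + 1)) := h2
        _ = 2 * (((k:ℝ) + 3) * Q (k + 1)) := by ring
        _ ≤ 2 * Q (k + 1 + 1) := mul_le_mul_of_nonneg_left h4 (by norm_num)
  -- apply the main lemma
  have hQ1 : Q 1 = ∏ i, (Real.Gamma (α i + β i)) ^ γ i := by
    rw [hQdef]
    simp
  refine leroy_main (fun k => P / Q (k + 1)) (2 * P / Q 1)
    (fun m => le_of_lt (div_pos hP (hQpos (m + 1))))
    (fun m => ?_) ?_
  · rw [div_mul_eq_mul_div, div_le_div_iff₀ (hQpos (m + 1)) (hQpos 1)]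
    calc P * ((m + 2)! : ℝ) * Q 1 = P * (((m + 2)! : ℝ) * Q 1) := by ring
      _ ≤ P * (2 * Q (m + 1)) := mul_le_mul_of_nonneg_left (key m) hP.le
      _ = 2 * P * Q (m + 1) := by ring
  · rw [div_mul_eq_mul_div, div_lt_one (hQpos 1), hQ1]
    calc 2 * P * (Real.exp 1 - 1) = 2 * (Real.exp 1 - 1) * P := by ring
      _ < ∏ i, (Real.Gamma (α i + β i)) ^ γ i := hcond
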